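/- arXiv:2504.08980 — 3 statements merged into one kernel-verified Lean document; each statement's English description precedes it below -/
import Mathlib

section
/- In the hyper-SBM with classes of sizes n_1,…,n_d, membership matrix Z, B = diag(1/n_r), type matrix T ∈ ℕ^{d×m}, and j the all-ones vector in ℝ^m, the hollowed mean matrix satisfies H(E[RRᵀ]) = Z B Σ_T B Zᵀ − ⊕_{r=1}^d μ_r (I_{n_r} − J_{n_r}/n_r), where Σ_T = TTᵀ − diag(Tj) and μ_r = Σ_{p=1}^m T_{rp}(T_{rp}−1)/(n_r(n_r−1)). -/
open Finset

/-- Eigendecomposition lemma setup for the hyper-SBM: the hollowed mean matrix satisfies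
`H(E[RRᵀ]) = Z B Σ_T B Zᵀ - ⊕ᵣ μᵣ (I_{nᵣ} - J_{nᵣ}/nᵣ)`, where
`Σ_T = TTᵀ - diag(Tj)` and `μᵣ = Σₚ T_{rp}(T_{rp}-1)/(nᵣ(nᵣ-1))`. The block-diagonal
matrix `⊕ᵣ μᵣ (I_{nᵣ} - J_{nᵣ}/nᵣ)` has `(i,j)` entry
`μ_{z i}·(δ_{ij} - 1/n_{z i})` when `z i = z j` and `0` otherwise. -/
theorem stmt10 (n m d : ℕ) (z : Fin n → Fin d)
    (nr : Fin d → ℕ) (hnr : nr = fun r => (Finset.univ.filter fun i => z i = r).card)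
    (hpos : ∀ r, 0 < nr r)
    (T : Fin d → Fin m → ℕ) (hT : ∀ r p, T r p ≤ nr r)
    (Z : Matrix (Fin n) (Fin d) ℝ) (hZ : Z = Matrix.of fun i r => if z i = r then 1 else 0)
    (B : Matrix (Fin d) (Fin d) ℝ) (hB : B = Matrix.diagonal fun r => ((nr r : ℝ))⁻¹)
    (Tm : Matrix (Fin d) (Fin m) ℝ) (hTm : Tm = Matrix.of fun r p => (T r p : ℝ))
    (SigT : Matrix (Fin d) (Fin d) ℝ)
    (hSigT : SigT = Tm * Tm.transpose - Matrix.diagonal fun r => ∑ p, (T r p : ℝ))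
    (μ : Fin d → ℝ)
    (hμ : μ = fun r => ∑ p, (T r p : ℝ) * ((T r p : ℝ) - 1) / ((nr r : ℝ) * ((nr r : ℝ) - 1)))
    (Em : Matrix (Fin n) (Fin n) ℝ)
    (hEm : Em = Matrix.of fun i j =>
      if i = j then ∑ p, (T (z i) p : ℝ) / (nr (z i) : ℝ)
      else if z i = z j then
        ∑ p, (T (z i) p : ℝ) * ((T (z i) p : ℝ) - 1) / ((nr (z i) : ℝ) * ((nr (z i) : ℝ) - 1))
      else ∑ p, (T (z i) p : ℝ) * (T (z j) p : ℝ) / ((nr (z i) : ℝ) * (nr (z j) : ℝ)))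
    (D : Matrix (Fin n) (Fin n) ℝ)
    (hD : D = Matrix.of fun i j =>
      if z i = z j then μ (z i) * ((if i = j then 1 else 0) - ((nr (z i) : ℝ))⁻¹) else 0) :
    Em - Matrix.diagonal (fun i => Em i i) = Z * B * SigT * B * Z.transpose - D := by
  have key : ∀ i j, (Z * B * SigT * B * Z.transpose) i j
      = ((nr (z i) : ℝ))⁻¹ * SigT (z i) (z j) * ((nr (z j) : ℝ))⁻¹ := by
    intro i j
    rw [hZ, hB]
    simp [Matrix.mul_apply, Matrix.diagonal, Finset.mul_sum, Finset.sum_mul,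
      ite_mul, mul_ite, mul_zero, zero_mul, Finset.sum_ite_eq, Finset.sum_ite_eq']
  have hSig : ∀ r s : Fin d, SigT r s = (∑ p, (T r p : ℝ) * (T s p : ℝ))
      - (if r = s then ∑ p, (T r p : ℝ) else 0) := by
    intro r s
    rw [hSigT, hTm]
    simp [Matrix.sub_apply, Matrix.mul_apply, Matrix.diagonal]
  have hmu2 : ∀ r : Fin d, 2 ≤ nr r →
      ((nr r : ℝ))⁻¹ * SigT r r * ((nr r : ℝ))⁻¹ = μ r * ((nr r : ℝ) - 1) * ((nr r : ℝ))⁻¹ := by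
    intro r hr
    have h0 : (nr r : ℝ) ≠ 0 := by positivity
    have h1 : (nr r : ℝ) - 1 ≠ 0 := by
      have : (2:ℝ) ≤ (nr r : ℝ) := by exact_mod_cast hr
      nlinarith
    rw [hSig, hμ, if_pos rfl]
    simp only
    rw [← Finset.sum_sub_distrib, Finset.mul_sum, Finset.sum_mul, Finset.sum_mul,
      Finset.sum_mul]
    refine Finset.sum_congr rfl fun p _ => ?_
    field_simp
  have hcard2 : ∀ i j : Fin n, i ≠ j → z i = z j → 2 ≤ nr (z i) := by
    intro i j hij hz
    rw [hnr]
    have hsub : ({i, j} : Finset (Fin n)) ⊆ Finset.univ.filter fun k => z k = z i := by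
      intro k hk
      simp only [Finset.mem_insert, Finset.mem_singleton] at hk
      rcases hk with rfl | rfl <;> simp [hz]
    calc 2 = ({i, j} : Finset (Fin n)).card := (Finset.card_pair hij).symm
      _ ≤ _ := Finset.card_le_card hsub
  ext i j
  have hkey := key i j
  by_cases hij : i = j
  · subst hij
    simp only [Matrix.sub_apply, Matrix.diagonal_apply_eq]
    rw [sub_self, hkey, hD]
    simp only [Matrix.of_apply, if_pos rfl]
    by_cases h2 : 2 ≤ nr (z i)
    · have h0 : (nr (z i) : ℝ) ≠ 0 := by positivity
      rw [hmu2 _ h2]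
      rw [if_pos trivial, if_pos trivial]
      field_simp
      ring
    · have h1 : nr (z i) = 1 := by have := hpos (z i); omega
      have hSig0 : SigT (z i) (z i) = 0 := by
        rw [hSig, if_pos rfl, ← Finset.sum_sub_distrib]
        apply Finset.sum_eq_zero
        intro p _
        have := hT (z i) p
        rw [h1] at this
        interval_cases h : T (z i) p <;> norm_num
      have hμ0 : μ (z i) = 0 := by
        rw [hμ]
        simp only
        apply Finset.sum_eq_zero
        intro p _
        rw [h1]
        norm_num
      rw [hSig0, hμ0]
      simp
  · simp only [Matrix.sub_apply, Matrix.diagonal_apply_ne _ hij]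
    rw [sub_zero, hkey, hEm, hD]
    simp only [Matrix.of_apply, if_neg hij]
    by_cases hz : z i = z j
    · have h2 := hcard2 i j hij hz
      have h0 : (nr (z i) : ℝ) ≠ 0 := by positivity
      rw [if_pos hz, ← hz]
      have heq := hmu2 (z i) h2
      rw [hμ] at heq ⊢
      simp only at heq ⊢
      rw [heq]
      rw [if_pos trivial]
      field_simp
      ring
    · have hzz : z i ≠ z j := hz
      rw [if_neg hz, if_neg hz, hSig, if_neg hzz, sub_zero, sub_zero]
      rw [Finset.mul_sum, Finset.sum_mul]
      refine Finset.sum_congr rfl fun p _ => ?_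
      rw [div_eq_mul_inv, mul_inv]
      ring
end

section
/- The matrix M = Z B Σ_T B Zᵀ − ⊕_{r=1}^d μ_r (I_{n_r} − J_{n_r}/n_r) (with all notation as in the hyper-SBM eigendecomposition lemma) has: (i) d eigenvalues equal to the eigenvalues of √B Σ_T √B with eigenvectors in range(Z), and (ii) eigenvalues −μ_1,…,−μ_d with multiplicities n_1−1,…,n_d−1 respectively, with eigenvectors orthogonal to range(Z). -/
open Finset

/-- The matrix `M = Z B Σ_T B Zᵀ - ⊕ᵣ μᵣ(I_{nᵣ} - J_{nᵣ}/nᵣ)`: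
(i) every eigenvalue of `√B Σ_T √B` is an eigenvalue of `M`, with eigenvector in
`range(Z)` (namely `Z√B v` for the corresponding eigenvector `v`), and
(ii) for each class `r`, `-μᵣ` is an eigenvalue of `M` with multiplicity `nᵣ - 1`:
there is a subspace of dimension `nᵣ - 1` on which `M` acts as `-μᵣ`, all of whose
elements are orthogonal to `range(Z)`. -/
theorem stmt11 (n m d : ℕ) (z : Fin n → Fin d)
    (nr : Fin d → ℕ) (hnr : nr = fun r => (Finset.univ.filter fun i => z i = r).card)
    (hpos : ∀ r, 0 < nr r)
    (T : Fin d → Fin m → ℕ) (hT : ∀ r p, T r p ≤ nr r)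
    (Z : Matrix (Fin n) (Fin d) ℝ) (hZ : Z = Matrix.of fun i r => if z i = r then 1 else 0)
    (B : Matrix (Fin d) (Fin d) ℝ) (hB : B = Matrix.diagonal fun r => ((nr r : ℝ))⁻¹)
    (sqrtB : Matrix (Fin d) (Fin d) ℝ)
    (hsB : sqrtB = Matrix.diagonal fun r => (Real.sqrt (nr r))⁻¹)
    (Tm : Matrix (Fin d) (Fin m) ℝ) (hTm : Tm = Matrix.of fun r p => (T r p : ℝ))
    (SigT : Matrix (Fin d) (Fin d) ℝ)
    (hSigT : SigT = Tm * Tm.transpose - Matrix.diagonal fun r => ∑ p, (T r p : ℝ))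
    (μ : Fin d → ℝ)
    (hμ : μ = fun r => ∑ p, (T r p : ℝ) * ((T r p : ℝ) - 1) / ((nr r : ℝ) * ((nr r : ℝ) - 1)))
    (D : Matrix (Fin n) (Fin n) ℝ)
    (hD : D = Matrix.of fun i j =>
      if z i = z j then μ (z i) * ((if i = j then 1 else 0) - ((nr (z i) : ℝ))⁻¹) else 0)
    (M : Matrix (Fin n) (Fin n) ℝ)
    (hM : M = Z * B * SigT * B * Z.transpose - D) :
    (∀ (lam : ℝ) (v : Fin d → ℝ), (sqrtB * SigT * sqrtB).mulVec v = lam • v →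
        M.mulVec ((Z * sqrtB).mulVec v) = lam • (Z * sqrtB).mulVec v) ∧
      (∀ r : Fin d, ∃ W : Submodule ℝ (Fin n → ℝ),
        Module.finrank ℝ W = nr r - 1 ∧
          ∀ w ∈ W, M.mulVec w = (-μ r) • w ∧
            ∀ v : Fin d → ℝ, dotProduct w (Z.mulVec v) = 0) := by
  have hnz : ∀ r : Fin d, (nr r : ℝ) ≠ 0 := fun r => Nat.cast_ne_zero.mpr (hpos r).ne'
  -- Z applied to a vector
  have hZv : ∀ u : Fin d → ℝ, Z.mulVec u = fun i => u (z i) := by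
    intro u
    funext i
    simp [hZ, Matrix.mulVec, dotProduct, ite_mul, Finset.sum_ite_eq]
  -- Zᵀ applied to a vector
  have hZtw : ∀ w : Fin n → ℝ, Z.transpose.mulVec w
      = fun s => ∑ j, (if z j = s then w j else 0) := by
    intro w
    funext s
    simp [hZ, Matrix.mulVec, dotProduct, ite_mul]
  -- D applied to a vector
  have hDw : ∀ (w : Fin n → ℝ) (i : Fin n), D.mulVec w i
      = μ (z i) * w i - μ (z i) * ((nr (z i) : ℝ))⁻¹ * ∑ j, (if z j = z i then w j else 0) := by
    intro w i
    have hterm : ∀ j, (if z i = z j then μ (z i) * ((if i = j then (1:ℝ) else 0)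
          - ((nr (z i) : ℝ))⁻¹) else 0) * w j
        = (if i = j then μ (z i) * w j else 0)
          - (μ (z i) * ((nr (z i) : ℝ))⁻¹ * (if z j = z i then w j else 0)) := by
      intro j
      by_cases hij : i = j
      · subst hij; simp; ring
      · by_cases hzz : z i = z j
        · simp only [if_pos hzz, if_pos hzz.symm, if_neg hij]; ring
        · simp only [if_neg hzz, if_neg hij,
            if_neg (show ¬z j = z i from fun h => hzz h.symm)]; ring
    simp only [hD, Matrix.mulVec, dotProduct, Matrix.of_apply]
    rw [Finset.sum_congr rfl fun j _ => hterm j, Finset.sum_sub_distrib,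
      Finset.sum_ite_eq, ← Finset.mul_sum]
    simp
  -- ZᵀZ = diag(nr)
  have hZtZ : Z.transpose * Z = Matrix.diagonal fun r => (nr r : ℝ) := by
    ext s t
    simp only [hZ, Matrix.mul_apply, Matrix.transpose_apply, Matrix.of_apply,
      Matrix.diagonal_apply]
    by_cases h : s = t
    · subst h
      rw [if_pos rfl]
      rw [Finset.sum_congr rfl fun i _ => show (if z i = s then (1:ℝ) else 0) *
          (if z i = s then (1:ℝ) else 0) = if z i = s then 1 else 0 by split <;> simp]
      rw [Finset.sum_boole, hnr]
    · rw [if_neg h]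
      apply Finset.sum_eq_zero
      intro i _
      split_ifs with h1 h2
      · exact absurd (h1.symm.trans h2) h
      all_goals ring
  have hBB : sqrtB * sqrtB = B := by
    have h1 : (fun i => (Real.sqrt (nr i))⁻¹ * (Real.sqrt (nr i))⁻¹)
        = fun i => ((nr i : ℝ))⁻¹ := by
      funext i
      rw [← mul_inv, Real.mul_self_sqrt (Nat.cast_nonneg _)]
    rw [hsB, hB, Matrix.diagonal_mul_diagonal, h1]
  have hBd : B * Matrix.diagonal (fun r => (nr r : ℝ)) = 1 := by
    rw [hB, Matrix.diagonal_mul_diagonal]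
    rw [show (fun r => ((nr r : ℝ))⁻¹ * (nr r : ℝ)) = fun _ => (1:ℝ) from
      funext fun r => inv_mul_cancel₀ (hnz r)]
    exact Matrix.diagonal_one
  -- sum over a class of a class-constant vector
  have hclassconst : ∀ (u : Fin d → ℝ) (s : Fin d),
      (∑ j, if z j = s then u (z j) else 0) = (nr s : ℝ) * u s := by
    intro u s
    rw [Finset.sum_congr rfl fun j _ => show (if z j = s then u (z j) else 0)
        = (if z j = s then (1:ℝ) else 0) * u s by
      split_ifs with h
      · rw [h]; ring
      · ring]
    rw [← Finset.sum_mul, Finset.sum_boole, hnr]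
  constructor
  · -- part (i)
    intro lam v hv
    have hmat : (Z * B * SigT * B * Z.transpose) * (Z * sqrtB)
        = (Z * sqrtB) * (sqrtB * SigT * sqrtB) := by
      simp only [Matrix.mul_assoc]
      rw [← Matrix.mul_assoc Z.transpose Z sqrtB, hZtZ,
        ← Matrix.mul_assoc B _ sqrtB, hBd, Matrix.one_mul, ← hBB,
        Matrix.mul_assoc sqrtB sqrtB (SigT * sqrtB)]
    have hDzero : D.mulVec ((Z * sqrtB).mulVec v) = 0 := by
      funext i
      rw [Pi.zero_apply]
      rw [← Matrix.mulVec_mulVec, hZv (sqrtB.mulVec v)]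
      rw [hDw]
      rw [hclassconst (sqrtB.mulVec v) (z i)]
      have h0 := hnz (z i)
      field_simp
      ring
    rw [hM, Matrix.sub_mulVec, hDzero, sub_zero, Matrix.mulVec_mulVec, hmat,
      ← Matrix.mulVec_mulVec, hv, Matrix.mulVec_smul]
  · -- part (ii)
    have key : ∀ (r : Fin d) (w : Fin n → ℝ), (∀ i, z i ≠ r → w i = 0) → (∑ i, w i) = 0 →
        M.mulVec w = (-μ r) • w ∧ ∀ v : Fin d → ℝ, dotProduct w (Z.mulVec v) = 0 := by
      intro r w hw0 hsum
      have hcs : ∀ s : Fin d, (∑ j, if z j = s then w j else 0) = 0 := by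
        intro s
        by_cases hs : s = r
        · subst hs
          rw [Finset.sum_congr rfl fun j _ => show (if z j = s then w j else 0) = w j by
            split_ifs with h
            · rfl
            · exact (hw0 j h).symm]
          exact hsum
        · apply Finset.sum_eq_zero
          intro j _
          split_ifs with h
          · exact hw0 j fun hr => hs (h.symm.trans hr)
          · rfl
      have hZt0 : Z.transpose.mulVec w = 0 := by
        rw [hZtw]
        funext s
        exact hcs s
      have hA0 : (Z * B * SigT * B * Z.transpose).mulVec w = 0 := by
        rw [← Matrix.mulVec_mulVec, hZt0, Matrix.mulVec_zero]
      have hDmu : D.mulVec w = μ r • w := by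
        funext i
        rw [hDw, hcs (z i)]
        by_cases h : z i = r
        · rw [h]; simp
        · simp [hw0 i h]
      constructor
      · rw [hM, Matrix.sub_mulVec, hA0, hDmu, zero_sub, ← neg_smul]
      · intro v
        rw [hZv]
        unfold dotProduct
        rw [Finset.sum_congr rfl fun i _ => show w i * v (z i) = w i * v r by
          by_cases h : z i = r
          · rw [h]
          · rw [hw0 i h]; ring]
        rw [← Finset.sum_mul, hsum, zero_mul]
    intro r
    set S : Finset (Fin n) := Finset.univ.filter fun i => z i = r with hSdef
    have hS : S.card = nr r := by rw [hnr]
    have hk : 0 < nr r := hpos r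
    set e : Fin (nr r) → Fin n := fun j => ((S.orderIsoOfFin hS) j : Fin n) with hedef
    have he : Function.Injective e :=
      fun a b hab => (S.orderIsoOfFin hS).injective (Subtype.val_injective hab)
    have hze : ∀ j, z (e j) = r := by
      intro j
      exact (Finset.mem_filter.mp ((S.orderIsoOfFin hS) j).2).2
    set ι : Fin (nr r - 1) → Fin n := fun j => e ⟨j + 1, by omega⟩ with hιdef
    set i0 : Fin n := e ⟨0, hk⟩ with hi0def
    have hιinj : Function.Injective ι := by
      intro a b hab
      have := he hab
      rw [Fin.mk.injEq] at this
      exact Fin.ext (by omega)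
    have hι0 : ∀ j, ι j ≠ i0 := by
      intro j h
      have := he h
      rw [Fin.mk.injEq] at this
      omega
    set u : Fin (nr r - 1) → (Fin n → ℝ) :=
      fun j => Pi.single (ι j) 1 - Pi.single i0 1 with hudef
    have hli : LinearIndependent ℝ u := by
      rw [Fintype.linearIndependent_iff]
      intro g hg j
      have := congrFun hg (ι j)
      simp only [Finset.sum_apply, Pi.smul_apply, hudef, Pi.sub_apply, Pi.single_apply,
        smul_eq_mul, Pi.zero_apply, if_neg (hι0 j), sub_zero] at this
      have h2 : (∑ x : Fin (nr r - 1), g x * if ι j = ι x then (1:ℝ) else 0) = g j := by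
        rw [Finset.sum_eq_single j]
        · simp
        · intro b _ hb
          rw [if_neg (fun h => hb (hιinj h.symm)), mul_zero]
        · intro h
          exact absurd (Finset.mem_univ j) h
      exact h2.symm.trans this
    refine ⟨Submodule.span ℝ (Set.range u), ?_, ?_⟩
    · rw [finrank_span_eq_card hli]
      simp
    · intro w hw
      have hQ : (∀ i, z i ≠ r → w i = 0) ∧ (∑ i, w i) = 0 := by
        refine Submodule.span_induction ?_ ?_ ?_ ?_ hw
        · rintro x ⟨j, rfl⟩
          constructor
          · intro i hi
            have h1 : i ≠ ι j := fun h => hi (h ▸ hze _)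
            have h2 : i ≠ i0 := fun h => hi (h ▸ hze _)
            simp [hudef, Pi.single_apply, h1, h2]
          · simp [hudef, Pi.single_apply, Finset.sum_sub_distrib, Finset.sum_ite_eq']
        · exact ⟨fun _ _ => rfl, Finset.sum_const_zero⟩
        · rintro x y _ _ ⟨hx1, hx2⟩ ⟨hy1, hy2⟩
          refine ⟨fun i hi => ?_, ?_⟩
          · simp [hx1 i hi, hy1 i hi]
          · simp [Finset.sum_add_distrib, hx2, hy2]
        · rintro a x _ ⟨hx1, hx2⟩
          refine ⟨fun i hi => ?_, ?_⟩
          · simp [hx1 i hi]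
          · simp [← Finset.mul_sum, hx2]
      exact key r w hQ.1 hQ.2
end

section
/- In the hyper-SBM, the d-dimensional latent positions of interactions separate identically and distinctly typed interactions: with Γ = ZBT of rank d and SVD Γ = USVᵀ (U ∈ ℝ^{n×d}, S diagonal positive definite, V ∈ ℝ^{m×d}), one has S Vᵀ e_p = S Vᵀ e_{p'} if and only if the type vectors satisfy T e_p = T e_{p'}. -/
open Finset

/-- In the hyper-SBM with `Γ = ZBT` of rank `d` and SVD `Γ = U S Vᵀ` (orthonormal
`U`, `V`, diagonal positive `S`), the interaction latent positions separate types: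
`S Vᵀ e_p = S Vᵀ e_{p'}` if and only if the type vectors satisfy `T e_p = T e_{p'}`. -/
theorem stmt17 (n m d : ℕ) (z : Fin n → Fin d) (hzsurj : Function.Surjective z)
    (nr : Fin d → ℕ) (hnr : nr = fun r => (Finset.univ.filter fun i => z i = r).card)
    (T : Fin d → Fin m → ℕ) (hT : ∀ r p, T r p ≤ nr r)
    (Γ : Matrix (Fin n) (Fin m) ℝ)
    (hΓ : Γ = Matrix.of fun i p => (T (z i) p : ℝ) / (nr (z i) : ℝ))
    (U : Matrix (Fin n) (Fin d) ℝ) (hU : U.transpose * U = 1)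
    (s : Fin d → ℝ) (hs : ∀ r, 0 < s r)
    (S : Matrix (Fin d) (Fin d) ℝ) (hS : S = Matrix.diagonal s)
    (V : Matrix (Fin m) (Fin d) ℝ) (hV : V.transpose * V = 1)
    (hSVD : Γ = U * S * V.transpose)
    (p p' : Fin m) :
    (fun r => (S * V.transpose) r p) = (fun r => (S * V.transpose) r p') ↔
      (fun r => T r p) = fun r => T r p' := by
  have key : S * V.transpose = U.transpose * Γ := by
    rw [hSVD, Matrix.mul_assoc, ← Matrix.mul_assoc, ← Matrix.mul_assoc, hU, Matrix.one_mul]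
  constructor
  · intro h
    have hΓcol : ∀ i, Γ i p = Γ i p' := by
      intro i
      have e : ∀ q, Γ i q = ∑ r, U i r * (S * V.transpose) r q := by
        intro q; rw [hSVD, Matrix.mul_assoc, Matrix.mul_apply]
      rw [e p, e p']
      exact Finset.sum_congr rfl fun r _ => by rw [congrFun h r]
    funext r
    obtain ⟨i, hi⟩ := hzsurj r
    have hnr0 : (nr r : ℝ) ≠ 0 := by
      have : (Finset.univ.filter fun j => z j = r).Nonempty := ⟨i, by simp [hi]⟩
      simp [hnr, Finset.card_pos.mpr this, Finset.card_eq_zero, this.ne_empty]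
    have := hΓcol i
    rw [hΓ] at this
    simp only [Matrix.of_apply, hi] at this
    field_simp at this
    exact_mod_cast this
  · intro h
    funext r
    rw [key, Matrix.mul_apply, Matrix.mul_apply]
    refine Finset.sum_congr rfl fun i _ => ?_
    rw [hΓ]
    simp only [Matrix.of_apply, congrFun h (z i)]
end
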